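/- Let k be a positive integer, let G be a finite graph of treewidth less than k, and let S ⊆ V(G) with |S| > 6k. Then there exist disjoint subsets L, R ⊆ S with |L| = |R| = k+1 and a separation (A,B) of G of order at most k with L ⊆ A and R ⊆ B. -/

import Mathlib

/-!
Common definitions: separations, stable separations, the improved graph,
external neighbourhoods, connected components, clique separations, and
rooted tree decompositions together with treewidth.
-/

section Defs

variable {V : Type} [Fintype V] [DecidableEq V]

/-- A separation of a graph `G`: a pair `(A, B)` covering the vertex set with no
edge between `A \ B` and `B \ A`.  Its order is `(A ∩ B).card`. -/
def IsSeparation (G : SimpleGraph V) (A B : Finset V) : Prop :=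
  A ∪ B = Finset.univ ∧ ∀ a ∈ A, a ∉ B → ∀ b ∈ B, b ∉ A → ¬G.Adj a b

/-- An `X`–`Y` separation: a separation `(A, B)` with `X ⊆ A` and `Y ⊆ B`. -/
def IsSepFor (G : SimpleGraph V) (X Y A B : Finset V) : Prop :=
  IsSeparation G A B ∧ X ⊆ A ∧ Y ⊆ B

/-- An `X`–`Y` separation of minimum possible order. -/
def IsMinSepFor (G : SimpleGraph V) (X Y A B : Finset V) : Prop :=
  IsSepFor G X Y A B ∧ ∀ A' B', IsSepFor G X Y A' B' → (A ∩ B).card ≤ (A' ∩ B').card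

/-- A separation `(A, B)` is `S`-stable if it is a minimum-order `S_L`–`S_R`
separation for some partition `(S_L, S_R)` of `S`. -/
def IsStable (G : SimpleGraph V) (S A B : Finset V) : Prop :=
  ∃ SL SR, Disjoint SL SR ∧ SL ∪ SR = S ∧ IsMinSepFor G SL SR A B

/-- `conn_G(x, y) < k`: there is a separation of order `< k` with `x ∈ A ∖ B` and
`y ∈ B ∖ A`.  (For adjacent `x, y` no such separation exists, i.e. `conn = +∞`.) -/
def ConnLt (G : SimpleGraph V) (x y : V) (k : ℕ) : Prop :=
  ∃ A B, IsSeparation G A B ∧ x ∈ A ∧ x ∉ B ∧ y ∈ B ∧ y ∉ A ∧ (A ∩ B).card < k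

/-- A graph is `k`-complemented when `conn(x,y) ≥ k` implies that `x` and `y` are
adjacent; equivalently, any two distinct nonadjacent vertices are separated by a
separation of order `< k`. -/
def KComplemented (G : SimpleGraph V) (k : ℕ) : Prop :=
  ∀ x y, x ≠ y → ¬G.Adj x y → ConnLt G x y k

lemma IsSeparation.symm2 {G : SimpleGraph V} {A B : Finset V} (h : IsSeparation G A B) :
    IsSeparation G B A :=
  ⟨by rw [Finset.union_comm]; exact h.1,
   fun a ha ha' b hb hb' hadj => h.2 b hb hb' a ha ha' hadj.symm⟩

/-- The `k`-improved graph `G^{(k)}`: same vertices, and `xy` is an edge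
iff `conn_G(x,y) ≥ k` (in particular all edges of `G` are kept). -/
def improvedGraph (G : SimpleGraph V) (k : ℕ) : SimpleGraph V where
  Adj x y := x ≠ y ∧ ¬ConnLt G x y k
  symm := ⟨by
    rintro x y ⟨hxy, h⟩
    refine ⟨hxy.symm, ?_⟩
    rintro ⟨A, B, hsep, hy, hy', hx, hx', hc⟩
    exact h ⟨B, A, hsep.symm2, hx, hx', hy, hy', by rwa [Finset.inter_comm]⟩⟩
  loopless := ⟨fun x h => h.1 rfl⟩

/-- The external neighbourhood `N_G(Z)`: vertices outside `Z` with a neighbour in `Z`. -/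
def extNbhd (G : SimpleGraph V) (Z : Set V) : Set V :=
  {v | v ∉ Z ∧ ∃ z ∈ Z, G.Adj v z}

/-- `Z` is the vertex set of a connected component of `G - X`: it is disjoint from `X`,
induces a connected subgraph, and all its neighbours outside itself lie in `X`. -/
def IsCompAway (G : SimpleGraph V) (X Z : Set V) : Prop :=
  Disjoint Z X ∧ (G.induce Z).Connected ∧
    ∀ ⦃v z : V⦄, z ∈ Z → G.Adj v z → v ∉ Z → v ∈ X

/-- The subgraph of `G` induced on `W` admits no clique separation: there is no
separation `(A, B)` of `G[W]` with `A ∖ B ≠ ∅`, `B ∖ A ≠ ∅` and `A ∩ B` a clique. -/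
def CliqueSepFreeOn (G : SimpleGraph V) (W : Finset V) : Prop :=
  ¬∃ A B : Finset V, A ∪ B = W ∧
      (∀ a ∈ A, a ∉ B → ∀ b ∈ B, b ∉ A → ¬G.Adj a b) ∧
      (A \ B).Nonempty ∧ (B \ A).Nonempty ∧ G.IsClique (↑(A ∩ B) : Set V)

/-- A rooted tree decomposition of the subgraph of `G` induced on `W`.
The rooted tree is given by a finite node type with a parent function
(every node reaches the root by iterating `parent`);
for every vertex of `W` the nodes whose bags contain it form a nonempty connected
subtree, and every edge of `G[W]` lies inside some bag. -/
structure RTDOn (V : Type) [Fintype V] [DecidableEq V] (G : SimpleGraph V) (W : Finset V) where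
  ι : Type
  instFintype : Fintype ι
  instDecEq : DecidableEq ι
  root : ι
  parent : ι → ι
  parent_root : parent root = root
  reaches_root : ∀ t, ∃ n, parent^[n] t = root
  bag : ι → Finset V
  bag_subset : ∀ t, bag t ⊆ W
  bags_connected : ∀ v ∈ W,
    ((SimpleGraph.fromRel fun s t => parent s = t).induce {t | v ∈ bag t}).Connected
  edge_in_bag : ∀ u ∈ W, ∀ v ∈ W, G.Adj u v → ∃ t, u ∈ bag t ∧ v ∈ bag t

/-- A rooted tree decomposition of `G`. -/
abbrev RTD (V : Type) [Fintype V] [DecidableEq V] (G : SimpleGraph V) : Type 1 :=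
  RTDOn V G Finset.univ

namespace RTDOn

variable {G : SimpleGraph V} {W : Finset V}

instance (D : RTDOn V G W) : Fintype D.ι := D.instFintype
instance (D : RTDOn V G W) : DecidableEq D.ι := D.instDecEq

/-- The decomposition has width at most `w`, i.e. all bags have size at most `w + 1`. -/
def widthLe (D : RTDOn V G W) (w : ℕ) : Prop := ∀ t, (D.bag t).card ≤ w + 1

/-- The decomposition has adhesion width at most `ℓ`: for every tree edge
`(t, parent t)` the intersection of the two bags has size at most `ℓ`. -/
def adhesionLe (D : RTDOn V G W) (l : ℕ) : Prop :=
  ∀ t, t ≠ D.root → (D.bag t ∩ D.bag (D.parent t)).card ≤ l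

/-- A family of potential bags captures a decomposition if every bag belongs to it. -/
def captures (D : RTDOn V G W) (ℬ : Finset (Finset V)) : Prop := ∀ t, D.bag t ∈ ℬ

/-- `γ(t)`: union of the bags at all descendants of `t`. -/
def gammaSet (D : RTDOn V G W) (t : D.ι) : Set V :=
  {v | ∃ s, (∃ n, D.parent^[n] s = t) ∧ v ∈ D.bag s}

/-- `σ(t)`: the adhesion of `t` with its parent (empty at the root). -/
def sigmaBag (D : RTDOn V G W) (t : D.ι) : Finset V :=
  if t = D.root then ∅ else D.bag t ∩ D.bag (D.parent t)

/-- `α(t) = γ(t) ∖ σ(t)`. -/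
def alphaSet (D : RTDOn V G W) (t : D.ι) : Set V := D.gammaSet t \ ↑(D.sigmaBag t)

end RTDOn

/-- A rooted tree decomposition is connectivity-sensitive when every `G[α(t)]`
is connected and `σ(t) = N_G(α(t))`. -/
def IsCSDecomp {G : SimpleGraph V} (D : RTD V G) : Prop :=
  ∀ t, (G.induce (D.alphaSet t)).Connected ∧ extNbhd G (D.alphaSet t) = ↑(D.sigmaBag t)

/-- The treewidth of `G`: the least `w` such that `G` has a (rooted) tree
decomposition of width at most `w`. -/
noncomputable def treewidth (G : SimpleGraph V) : ℕ :=
  sInf {w : ℕ | ∃ D : RTD V G, D.widthLe w}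

/-- `ℬ^{≤q}`: all sets of size at most `q` contained in some member of `ℬ`. -/
def belowFam (ℬ : Finset (Finset V)) (q : ℕ) : Finset (Finset V) :=
  Finset.univ.filter fun X => X.card ≤ q ∧ ∃ B ∈ ℬ, X ⊆ B

end Defs

section AuxTW

variable {V : Type} [Fintype V] [DecidableEq V]

/-- The trivial rooted tree decomposition with a single bag. -/
def trivRTD (G : SimpleGraph V) : RTD V G where
  ι := Unit
  instFintype := inferInstance
  instDecEq := inferInstance
  root := ()
  parent := id
  parent_root := rfl
  reaches_root _ := ⟨0, rfl⟩
  bag _ := Finset.univ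
  bag_subset _ := Finset.Subset.refl _
  bags_connected v _ := by
    rw [SimpleGraph.connected_iff]
    refine ⟨fun a b => ?_, ⟨⟨(), Finset.mem_univ v⟩⟩⟩
    have : a = b := Subtype.ext (Subsingleton.elim _ _)
    rw [this]
  edge_in_bag u _ v _ _ := ⟨(), Finset.mem_univ u, Finset.mem_univ v⟩

/-- Main combinatorial lemma: from a rooted tree-decomposition with all bags of
size `≤ k`, get a balanced separation of a big set `S`. -/
lemma tw_sep_aux (G : SimpleGraph V) (k : ℕ) (hk : 0 < k)
    (ι : Type) [Fintype ι] [DecidableEq ι] (r : ι) (P : ι → ι)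
    (hr : P r = r) (hreach : ∀ t, ∃ n, P^[n] t = r)
    (bag : ι → Finset V)
    (hconn : ∀ v : V, ((SimpleGraph.fromRel fun s t => P s = t).induce {t | v ∈ bag t}).Connected)
    (hedge : ∀ u v : V, G.Adj u v → ∃ t, u ∈ bag t ∧ v ∈ bag t)
    (hbagk : ∀ t, (bag t).card ≤ k)
    (S : Finset V) (hS : 6 * k < S.card) :
    ∃ L R : Finset V, L ⊆ S ∧ R ⊆ S ∧ Disjoint L R ∧
      L.card = k + 1 ∧ R.card = k + 1 ∧
      ∃ A B : Finset V, IsSeparation G A B ∧ (A ∩ B).card ≤ k ∧ L ⊆ A ∧ R ⊆ B := by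
  classical
  have hSpos : 0 < S.card := by omega
  -- basic iterate facts
  have hrfix : ∀ n, P^[n] r = r := fun n => Function.iterate_fixed hr n
  have hnocyc : ∀ t n, 0 < n → P^[n] t = t → t = r := by
    intro t n hn hcyc
    obtain ⟨N, hN⟩ := hreach t
    have h1 : P^[n * N] t = t := by
      rw [Function.iterate_mul]; exact Function.iterate_fixed hcyc N
    have h2 : P^[n * N] t = r := by
      have : n * N = (n * N - N) + N := by
        have : N ≤ n * N := Nat.le_mul_of_pos_left N hn
        omega
      rw [this, Function.iterate_add_apply, hN, hrfix]
    rw [h1] at h2; exact h2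
  -- every vertex lies in some bag
  have hvbag : ∀ v : V, ∃ t, v ∈ bag t := fun v => by
    obtain ⟨⟨t, ht⟩⟩ := (hconn v).nonempty
    exact ⟨t, ht⟩
  -- weight sets
  set wS : ι → Finset V := fun t => S.filter fun v => ∃ s, (∃ n, P^[n] s = t) ∧ v ∈ bag s with hwS
  -- centroid choice
  have hHne : (Finset.univ.filter fun t : ι => S.card < 2 * (wS t).card).Nonempty := by
    refine ⟨r, Finset.mem_filter.2 ⟨Finset.mem_univ _, ?_⟩⟩
    have : S ⊆ wS r := by
      intro v hv
      obtain ⟨s, hs⟩ := hvbag v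
      exact Finset.mem_filter.2 ⟨hv, s, hreach s, hs⟩
    have := Finset.card_le_card this
    omega
  obtain ⟨t, htH, htmin⟩ := Finset.exists_min_image _
    (fun t => (Finset.univ.filter fun s => ∃ n, P^[n] s = t).card) hHne
  have htw : S.card < 2 * (wS t).card := (Finset.mem_filter.1 htH).2
  -- children of t
  set C : Finset ι := Finset.univ.filter fun c => P c = t ∧ c ≠ t with hC
  have hCt : ∀ c ∈ C, P c = t ∧ c ≠ t := fun c hc => (Finset.mem_filter.1 hc).2
  -- t is not a descendant of its children
  have htnotdesc : ∀ c ∈ C, ¬∃ n, P^[n] t = c := by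
    rintro c hc ⟨n, hn⟩
    have h1 : P^[n+1] t = t := by
      rw [Function.iterate_succ_apply', hn, (hCt c hc).1]
    have h2 : t = r := hnocyc t (n+1) (Nat.succ_pos n) h1
    exact (hCt c hc).2 (by rw [hn.symm, h2, hrfix])
  -- children have small weight
  have hchild_small : ∀ c ∈ C, 2 * (wS c).card ≤ S.card := by
    intro c hc
    by_contra hbig
    push_neg at hbig
    have hcH : c ∈ Finset.univ.filter fun t : ι => S.card < 2 * (wS t).card :=
      Finset.mem_filter.2 ⟨Finset.mem_univ _, hbig⟩
    have hmin := htmin c hcH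
    have hsub : (Finset.univ.filter fun s : ι => ∃ n, P^[n] s = c) ⊂
        (Finset.univ.filter fun s : ι => ∃ n, P^[n] s = t) := by
      constructor
      · intro s hs
        obtain ⟨n, hn⟩ := (Finset.mem_filter.1 hs).2
        refine Finset.mem_filter.2 ⟨Finset.mem_univ _, n+1, ?_⟩
        rw [Function.iterate_succ_apply', hn, (hCt c hc).1]
      · intro hcon
        have : t ∈ Finset.univ.filter fun s : ι => ∃ n, P^[n] s = c :=
          hcon (Finset.mem_filter.2 ⟨Finset.mem_univ _, 0, rfl⟩)
        exact htnotdesc c hc (Finset.mem_filter.1 this).2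
    exact absurd hmin (by simpa using Finset.card_lt_card hsub)
  -- two distinct children have disjoint descendant sets
  have hdesc_disj : ∀ c ∈ C, ∀ c' ∈ C, ∀ s : ι,
      (∃ n, P^[n] s = c) → (∃ m, P^[m] s = c') → c = c' := by
    have key : ∀ c ∈ C, ∀ c' ∈ C, ∀ s : ι, ∀ n m, n ≤ m →
        P^[n] s = c → P^[m] s = c' → c = c' := by
      intro c hc c' hc' s n m hnm hn hm
      have h1 : P^[m - n] c = c' := by
        rw [← hn, ← Function.iterate_add_apply]
        rw [show m - n + n = m by omega, hm]
      rcases Nat.eq_zero_or_pos (m - n) with h0 | hpos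
      · rw [h0] at h1; exact h1
      · exfalso
        obtain ⟨e, he⟩ : ∃ e, m - n = e + 1 := ⟨m - n - 1, by omega⟩
        rw [he, Function.iterate_succ_apply, (hCt c hc).1] at h1
        have hcyc : P^[e+1] t = t := by
          rw [Function.iterate_succ_apply', h1, (hCt c' hc').1]
        have htr : t = r := hnocyc t (e+1) (Nat.succ_pos e) hcyc
        have : c' = t := by rw [← h1, htr, hrfix]
        exact (hCt c' hc').2 this
    rintro c hc c' hc' s ⟨n, hn⟩ ⟨m, hm⟩
    rcases le_total n m with h | h
    · exact key c hc c' hc' s n m h hn hm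
    · exact (key c' hc' c hc s m n h hm hn).symm
  -- locality: a vertex outside bag t whose bag-subtree meets the subtree below a
  -- child c has all its bags below c
  have hloc : ∀ v : V, v ∉ bag t → ∀ c ∈ C, ∀ s0, (∃ n, P^[n] s0 = c) → v ∈ bag s0 →
      ∀ s1, v ∈ bag s1 → ∃ n, P^[n] s1 = c := by
    intro v hv c hc s0 hs0 hvs0 s1 hvs1
    obtain ⟨wlk⟩ := (hconn v).preconnected ⟨s0, hvs0⟩ ⟨s1, hvs1⟩
    have H : ∀ (a b : {u : ι | v ∈ bag u}),
        ((SimpleGraph.fromRel fun s u => P s = u).induce {u | v ∈ bag u}).Walk a b →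
        (∃ n, P^[n] (a : ι) = c) → ∃ n, P^[n] (b : ι) = c := by
      intro a b w
      induction w with
      | nil => exact id
      | @cons x y z hxy p ih =>
        intro hx
        refine ih ?_
        have hadj : (x : ι) ≠ (y : ι) ∧ (P (x : ι) = (y : ι) ∨ P (y : ι) = (x : ι)) := by
          simpa [SimpleGraph.comap_adj, SimpleGraph.fromRel_adj] using hxy
        obtain ⟨n, hn⟩ := hx
        rcases hadj.2 with h | h
        · rcases Nat.eq_zero_or_pos n with h0 | hpos
          · exfalso
            rw [h0, Function.iterate_zero_apply] at hn
            have : (y : ι) = t := by rw [← h, hn, (hCt c hc).1]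
            exact hv (this ▸ y.2)
          · obtain ⟨m, hm⟩ : ∃ m, n = m + 1 := ⟨n - 1, by omega⟩
            refine ⟨m, ?_⟩
            rw [hm, Function.iterate_succ_apply, h] at hn
            exact hn
        · exact ⟨n + 1, by rw [Function.iterate_succ_apply, h, hn]⟩
    exact H _ _ wlk hs0
  -- the pieces
  set Pc : ι → Finset V := fun c =>
    Finset.univ.filter fun v => v ∉ bag t ∧ ∃ s, (∃ n, P^[n] s = c) ∧ v ∈ bag s with hPc
  set P0 : Finset V := Finset.univ \ (bag t ∪ C.biUnion Pc) with hP0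
  set piece : Option ι → Finset V := fun o => o.elim P0 Pc with hpiece
  set I : Finset (Option ι) := insert none (C.image some) with hI
  -- piece membership facts
  have hPc_mem : ∀ c v, v ∈ Pc c ↔ v ∉ bag t ∧ ∃ s, (∃ n, P^[n] s = c) ∧ v ∈ bag s := by
    intro c v; rw [hPc]; simp
  have hP0_mem : ∀ v, v ∈ P0 ↔ v ∉ bag t ∧ ∀ c ∈ C, v ∉ Pc c := by
    intro v; rw [hP0]; simp
  -- every bag below t is inside bag t ∪ pieces of children
  have hbelow : ∀ n s v, P^[n] s = t → v ∈ bag s → v ∈ bag t ∨ ∃ c ∈ C, v ∈ Pc c := by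
    intro n
    induction n with
    | zero => intro s v hs hv; left; rw [← hs]; exact hv
    | succ m ih =>
      intro s v hs hv
      by_cases hvt : v ∈ bag t
      · left; exact hvt
      by_cases hct : P^[m] s = t
      · exact ih s v hct hv
      · right
        refine ⟨P^[m] s, Finset.mem_filter.2 ⟨Finset.mem_univ _, ?_, hct⟩, ?_⟩
        · calc P (P^[m] s) = P^[m+1] s := (Function.iterate_succ_apply' P m s).symm
            _ = t := hs
        · exact (hPc_mem _ v).2 ⟨hvt, s, ⟨m, rfl⟩, hv⟩
  -- pieces are pairwise disjoint
  have hPcPc : ∀ c ∈ C, ∀ c' ∈ C, c ≠ c' → ∀ v, v ∈ Pc c → v ∈ Pc c' → False := by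
    intro c hc c' hc' hne v hvc hvc'
    obtain ⟨hvt, s, hsd, hvs⟩ := (hPc_mem c v).1 hvc
    obtain ⟨-, s', hsd', hvs'⟩ := (hPc_mem c' v).1 hvc'
    have : ∃ n, P^[n] s' = c := hloc v hvt c hc s hsd hvs s' hvs'
    exact hne (hdesc_disj c hc c' hc' s' this hsd')
  -- neighbours of a piece vertex are in bag t or the same piece
  have hcross : ∀ c ∈ C, ∀ u v, u ∈ Pc c → G.Adj u v → v ∈ bag t ∨ v ∈ Pc c := by
    intro c hc u v hu hadj
    obtain ⟨hut, s0, hs0, hus0⟩ := (hPc_mem c u).1 hu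
    obtain ⟨s, hus, hvs⟩ := hedge u v hadj
    have hsd : ∃ n, P^[n] s = c := hloc u hut c hc s0 hs0 hus0 s hus
    by_cases hvt : v ∈ bag t
    · left; exact hvt
    · right; exact (hPc_mem c v).2 ⟨hvt, s, hsd, hvs⟩
  -- pieces, as indexed by I, are pairwise disjoint and have no edges between them
  have hpw : ∀ o ∈ I, ∀ o' ∈ I, o ≠ o' → ∀ v, v ∈ piece o → v ∈ piece o' → False := by
    intro o ho o' ho' hne v hv hv'
    rw [hI, Finset.mem_insert] at ho ho'
    rcases ho with rfl | ho <;> rcases ho' with rfl | ho'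
    · exact hne rfl
    · obtain ⟨c, hc, rfl⟩ := Finset.mem_image.1 ho'
      exact ((hP0_mem v).1 hv).2 c hc hv'
    · obtain ⟨c, hc, rfl⟩ := Finset.mem_image.1 ho
      exact ((hP0_mem v).1 hv').2 c hc hv
    · obtain ⟨c, hc, rfl⟩ := Finset.mem_image.1 ho
      obtain ⟨c', hc', rfl⟩ := Finset.mem_image.1 ho'
      exact hPcPc c hc c' hc' (by rintro rfl; exact hne rfl) v hv hv'
  have hnoedge : ∀ o ∈ I, ∀ o' ∈ I, o ≠ o' → ∀ u ∈ piece o, ∀ v ∈ piece o', ¬G.Adj u v := by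
    have hsome : ∀ c ∈ C, ∀ o' ∈ I, some c ≠ o' → ∀ u ∈ Pc c, ∀ v ∈ piece o', ¬G.Adj u v := by
      intro c hc o' ho' hne u hu v hv hadj
      rcases hcross c hc u v hu hadj with h | h
      · -- v ∈ bag t : impossible since pieces avoid bag t
        rw [hI, Finset.mem_insert] at ho'
        rcases ho' with rfl | ho'
        · exact ((hP0_mem v).1 hv).1 h
        · obtain ⟨c', hc', rfl⟩ := Finset.mem_image.1 ho'
          exact ((hPc_mem c' v).1 hv).1 h
      · -- v ∈ Pc c : contradicts disjointness
        have hcI : some c ∈ I := by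
          rw [hI]; exact Finset.mem_insert_of_mem (Finset.mem_image_of_mem some hc)
        exact hpw (some c) hcI o' ho' hne v h hv
    intro o ho o' ho' hne u hu v hv hadj
    rw [hI, Finset.mem_insert] at ho
    rcases ho with rfl | ho
    · -- o = none; then o' = some c'
      have ho'2 := ho'
      rw [hI, Finset.mem_insert] at ho'2
      rcases ho'2 with rfl | ho'2
      · exact hne rfl
      · obtain ⟨c', hc', rfl⟩ := Finset.mem_image.1 ho'2
        have hnI : none ∈ I := by rw [hI]; exact Finset.mem_insert_self _ _
        exact hsome c' hc' none hnI (by simp) v hv u hu hadj.symm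
    · obtain ⟨c, hc, rfl⟩ := Finset.mem_image.1 ho
      exact hsome c hc o' ho' hne u hu v hv hadj
  -- cover
  have hcover : ∀ v : V, v ∈ bag t ∨ ∃ o ∈ I, v ∈ piece o := by
    intro v
    by_cases hvt : v ∈ bag t
    · left; exact hvt
    by_cases hvc : ∃ c ∈ C, v ∈ Pc c
    · obtain ⟨c, hc, hv⟩ := hvc
      right
      exact ⟨some c, by rw [hI]; exact Finset.mem_insert_of_mem (Finset.mem_image_of_mem some hc), hv⟩
    · right
      refine ⟨none, by rw [hI]; exact Finset.mem_insert_self _ _, ?_⟩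
      exact (hP0_mem v).2 ⟨hvt, fun c hc hv => hvc ⟨c, hc, hv⟩⟩
  -- pieces avoid bag t
  have hpX : ∀ o ∈ I, ∀ v ∈ piece o, v ∉ bag t := by
    intro o ho v hv
    rw [hI, Finset.mem_insert] at ho
    rcases ho with rfl | ho
    · exact ((hP0_mem v).1 hv).1
    · obtain ⟨c, hc, rfl⟩ := Finset.mem_image.1 ho
      exact ((hPc_mem c v).1 hv).1
  -- weights
  have hw2 : ∀ o ∈ I, 2 * (S ∩ piece o).card ≤ S.card := by
    intro o ho
    rw [hI, Finset.mem_insert] at ho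
    rcases ho with rfl | ho
    · -- o = none : S ∩ P0 ⊆ S \ wS t
      have hsub : S ∩ P0 ⊆ S \ wS t := by
        intro v hv
        obtain ⟨hvS, hvP⟩ := Finset.mem_inter.1 hv
        refine Finset.mem_sdiff.2 ⟨hvS, fun hmem => ?_⟩
        obtain ⟨s, ⟨n, hn⟩, hvs⟩ := (Finset.mem_filter.1 hmem).2
        rcases hbelow n s v hn hvs with h | ⟨c, hc, h⟩
        · exact ((hP0_mem v).1 hvP).1 h
        · exact ((hP0_mem v).1 hvP).2 c hc h
      have h1 := Finset.card_le_card hsub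
      have h2 : (S \ wS t).card + (S ∩ wS t).card = S.card := Finset.card_sdiff_add_card_inter S (wS t)
      have h3 : wS t ⊆ S := Finset.filter_subset _ _
      have h4 : S ∩ wS t = wS t := Finset.inter_eq_right.2 h3
      rw [h4] at h2
      simp only [hpiece, Option.elim_none]
      omega
    · obtain ⟨c, hc, rfl⟩ := Finset.mem_image.1 ho
      have hsub : S ∩ Pc c ⊆ wS c := by
        intro v hv
        obtain ⟨hvS, hvP⟩ := Finset.mem_inter.1 hv
        obtain ⟨-, s, hs, hvs⟩ := (hPc_mem c v).1 hvP
        exact Finset.mem_filter.2 ⟨hvS, s, hs, hvs⟩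
      have := Finset.card_le_card hsub
      have := hchild_small c hc
      simp only [hpiece, Option.elim_some]
      omega
  -- total weight
  have hbiU : S \ bag t = I.biUnion fun o => S ∩ piece o := by
    ext v
    simp only [Finset.mem_sdiff, Finset.mem_biUnion, Finset.mem_inter]
    constructor
    · rintro ⟨hvS, hvt⟩
      rcases hcover v with h | ⟨o, ho, h⟩
      · exact absurd h hvt
      · exact ⟨o, ho, hvS, h⟩
    · rintro ⟨o, ho, hvS, hv⟩
      exact ⟨hvS, hpX o ho v hv⟩
  have htot : ∑ o ∈ I, (S ∩ piece o).card = (S \ bag t).card := by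
    rw [hbiU]
    exact (Finset.card_biUnion fun o ho o' ho' hne =>
      Finset.disjoint_left.2 fun v hv hv' =>
        hpw o ho o' ho' hne v (Finset.mem_inter.1 hv).2 (Finset.mem_inter.1 hv').2).symm
  have htotk : S.card ≤ (∑ o ∈ I, (S ∩ piece o).card) + k := by
    have h2 : (S \ bag t).card + (S ∩ bag t).card = S.card := Finset.card_sdiff_add_card_inter _ _
    have h3 : (S ∩ bag t).card ≤ (bag t).card := Finset.card_le_card (Finset.inter_subset_right)
    have := hbagk t
    omega
  -- minimal subfamily T with weight ≥ k+1
  have hTne : (I.powerset.filter fun T => k + 1 ≤ ∑ o ∈ T, (S ∩ piece o).card).Nonempty := by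
    refine ⟨I, Finset.mem_filter.2 ⟨Finset.mem_powerset.2 le_rfl, ?_⟩⟩
    omega
  obtain ⟨T, hTmem, hTmin⟩ := Finset.exists_min_image _ Finset.card hTne
  have hTsub : T ⊆ I := Finset.mem_powerset.1 (Finset.mem_filter.1 hTmem).1
  have hTwt : k + 1 ≤ ∑ o ∈ T, (S ∩ piece o).card := (Finset.mem_filter.1 hTmem).2
  have hTne2 : T.Nonempty := by
    rcases Finset.eq_empty_or_nonempty T with rfl | h
    · exact absurd hTwt (by simp)
    · exact h
  obtain ⟨o₀, ho₀⟩ := hTne2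
  have herase : ∑ o ∈ T.erase o₀, (S ∩ piece o).card ≤ k := by
    by_contra hcon
    push_neg at hcon
    have hmem : T.erase o₀ ∈ I.powerset.filter fun T => k + 1 ≤ ∑ o ∈ T, (S ∩ piece o).card :=
      Finset.mem_filter.2 ⟨Finset.mem_powerset.2 ((Finset.erase_subset _ _).trans hTsub), hcon⟩
    have := hTmin _ hmem
    have := Finset.card_erase_lt_of_mem ho₀
    omega
  have hsplit : (S ∩ piece o₀).card + ∑ o ∈ T.erase o₀, (S ∩ piece o).card
      = ∑ o ∈ T, (S ∩ piece o).card := Finset.add_sum_erase T (fun o => (S ∩ piece o).card) ho₀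
  have ho₀w : 2 * (S ∩ piece o₀).card ≤ S.card := hw2 o₀ (hTsub ho₀)
  have hsdiff : ∑ o ∈ I \ T, (S ∩ piece o).card + ∑ o ∈ T, (S ∩ piece o).card
      = ∑ o ∈ I, (S ∩ piece o).card := Finset.sum_sdiff hTsub
  have hBwt : k + 1 ≤ ∑ o ∈ I \ T, (S ∩ piece o).card := by omega
  -- extract L and R
  have hinterT : S ∩ T.biUnion piece = T.biUnion fun o => S ∩ piece o := by
    ext v; simp only [Finset.mem_inter, Finset.mem_biUnion]; tauto
  have hinterB : S ∩ (I \ T).biUnion piece = (I \ T).biUnion fun o => S ∩ piece o := by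
    ext v; simp only [Finset.mem_inter, Finset.mem_biUnion]; tauto
  have hdisjfam : ∀ (J : Finset (Option ι)), J ⊆ I →
      (J.biUnion fun o => S ∩ piece o).card = ∑ o ∈ J, (S ∩ piece o).card := by
    intro J hJ
    exact Finset.card_biUnion fun o ho o' ho' hne =>
      Finset.disjoint_left.2 fun v hv hv' =>
        hpw o (hJ ho) o' (hJ ho') hne v (Finset.mem_inter.1 hv).2 (Finset.mem_inter.1 hv').2
  have hLbig : k + 1 ≤ (S ∩ T.biUnion piece).card := by
    rw [hinterT, hdisjfam T hTsub]; exact hTwt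
  have hRbig : k + 1 ≤ (S ∩ (I \ T).biUnion piece).card := by
    rw [hinterB, hdisjfam _ (Finset.sdiff_subset)]; exact hBwt
  obtain ⟨L, hLsub, hLcard⟩ := Finset.exists_subset_card_eq hLbig
  obtain ⟨R, hRsub, hRcard⟩ := Finset.exists_subset_card_eq hRbig
  -- the separation
  refine ⟨L, R, ?_, ?_, ?_, hLcard, hRcard,
    bag t ∪ T.biUnion piece, bag t ∪ (I \ T).biUnion piece, ⟨?_, ?_⟩, ?_, ?_, ?_⟩
  · exact fun v hv => (Finset.mem_inter.1 (hLsub hv)).1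
  · exact fun v hv => (Finset.mem_inter.1 (hRsub hv)).1
  · -- Disjoint L R
    refine Finset.disjoint_left.2 fun v hvL hvR => ?_
    obtain ⟨o, ho, hvo⟩ := Finset.mem_biUnion.1 (Finset.mem_inter.1 (hLsub hvL)).2
    obtain ⟨o', ho', hvo'⟩ := Finset.mem_biUnion.1 (Finset.mem_inter.1 (hRsub hvR)).2
    have hne : o ≠ o' := by
      rintro rfl
      exact (Finset.mem_sdiff.1 ho').2 ho
    exact hpw o (hTsub ho) o' (Finset.sdiff_subset ho') hne v hvo hvo'
  · -- union is univ
    apply Finset.eq_univ_of_forall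
    intro v
    rcases hcover v with h | ⟨o, ho, h⟩
    · exact Finset.mem_union.2 (Or.inl (Finset.mem_union.2 (Or.inl h)))
    · by_cases hoT : o ∈ T
      · exact Finset.mem_union.2 (Or.inl (Finset.mem_union.2 (Or.inr
          (Finset.mem_biUnion.2 ⟨o, hoT, h⟩))))
      · exact Finset.mem_union.2 (Or.inr (Finset.mem_union.2 (Or.inr
          (Finset.mem_biUnion.2 ⟨o, Finset.mem_sdiff.2 ⟨ho, hoT⟩, h⟩))))
  · -- no edges across
    intro a ha ha' b hb hb' hadj
    have haX : a ∉ bag t := fun h => ha' (Finset.mem_union.2 (Or.inl h))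
    have hbX : b ∉ bag t := fun h => hb' (Finset.mem_union.2 (Or.inl h))
    have haP : ∃ o ∈ T, a ∈ piece o := by
      rcases Finset.mem_union.1 ha with h | h
      · exact absurd h haX
      · exact Finset.mem_biUnion.1 h
    have hbP : ∃ o ∈ I \ T, b ∈ piece o := by
      rcases Finset.mem_union.1 hb with h | h
      · exact absurd h hbX
      · exact Finset.mem_biUnion.1 h
    obtain ⟨o, ho, hao⟩ := haP
    obtain ⟨o', ho', hbo'⟩ := hbP
    have hne : o ≠ o' := by
      rintro rfl
      exact (Finset.mem_sdiff.1 ho').2 ho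
    exact hnoedge o (hTsub ho) o' (Finset.sdiff_subset ho') hne a hao b hbo' hadj
  · -- order ≤ k
    have hsub : (bag t ∪ T.biUnion piece) ∩ (bag t ∪ (I \ T).biUnion piece) ⊆ bag t := by
      intro v hv
      obtain ⟨hv1, hv2⟩ := Finset.mem_inter.1 hv
      by_contra hvt
      have h1 : ∃ o ∈ T, v ∈ piece o := by
        rcases Finset.mem_union.1 hv1 with h | h
        · exact absurd h hvt
        · exact Finset.mem_biUnion.1 h
      have h2 : ∃ o ∈ I \ T, v ∈ piece o := by
        rcases Finset.mem_union.1 hv2 with h | h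
        · exact absurd h hvt
        · exact Finset.mem_biUnion.1 h
      obtain ⟨o, ho, hvo⟩ := h1
      obtain ⟨o', ho', hvo'⟩ := h2
      have hne : o ≠ o' := by
        rintro rfl
        exact (Finset.mem_sdiff.1 ho').2 ho
      exact hpw o (hTsub ho) o' (Finset.sdiff_subset ho') hne v hvo hvo'
    exact le_trans (Finset.card_le_card hsub) (hbagk t)
  · -- L ⊆ A
    exact fun v hv => Finset.mem_union.2 (Or.inr (Finset.mem_inter.1 (hLsub hv)).2)
  · -- R ⊆ B
    exact fun v hv => Finset.mem_union.2 (Or.inr (Finset.mem_inter.1 (hRsub hv)).2)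

end AuxTW

/-- In a graph of treewidth `< k`, any set `S` with `|S| > 6k` contains
disjoint subsets `L, R` of size `k+1` separated by a separation of order at most `k`. -/
theorem stmt14 {V : Type} [Fintype V] [DecidableEq V] (k : ℕ) (hk : 0 < k)
    (G : SimpleGraph V) (htw : treewidth G < k) (S : Finset V) (hS : 6 * k < S.card) :
    ∃ L R : Finset V, L ⊆ S ∧ R ⊆ S ∧ Disjoint L R ∧
      L.card = k + 1 ∧ R.card = k + 1 ∧
      ∃ A B : Finset V, IsSeparation G A B ∧ (A ∩ B).card ≤ k ∧ L ⊆ A ∧ R ⊆ B := by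
  classical
  -- obtain an optimal decomposition
  have hne : {w : ℕ | ∃ D : RTD V G, D.widthLe w}.Nonempty :=
    ⟨Fintype.card V, trivRTD G, fun t => by
      simp only [trivRTD, Finset.card_univ]
      exact Nat.le_succ _⟩
  obtain ⟨D, hD⟩ := Nat.sInf_mem hne
  have hk2 : treewidth G + 1 ≤ k := by omega
  have hbagk : ∀ t, (D.bag t).card ≤ k := fun t => (hD t).trans hk2
  exact tw_sep_aux G k hk D.ι D.root D.parent D.parent_root D.reaches_root D.bag
    (fun v => D.bags_connected v (Finset.mem_univ v))
    (fun u v h => D.edge_in_bag u (Finset.mem_univ u) v (Finset.mem_univ v) h)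
    hbagk S hS
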